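/- Let r ≥ 0, 0 < s < 1 + r, a ≤ r, a < 1 + r − s, a < 1/2, and let b' ∈ (1/2, 1/2 + ε) for ε > 0 sufficiently small (depending on r, s, a). Then sup_{k∈ℤ} Σ_{l∈ℤ, l≠±k} ⟨k⟩^{2s+2a} ⟨l⟩^{−2s} ⟨k−l⟩^{−2r} ⟨l+k⟩^{−(2−2b')} ⟨l−k⟩^{−(2−2b')} < ∞. -/
import Mathlib


/-- Japanese bracket. -/
noncomputable def jb (x : ℝ) : ℝ := Real.sqrt (1 + x ^ 2)

lemma one_le_jb (x : ℝ) : 1 ≤ jb x := by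
  rw [jb]
  have h := Real.sqrt_le_sqrt (show (1:ℝ) ≤ 1 + x ^ 2 by nlinarith [sq_nonneg x])
  simpa using h

lemma jb_pos (x : ℝ) : 0 < jb x := lt_of_lt_of_le one_pos (one_le_jb x)

lemma jb_nonneg (x : ℝ) : 0 ≤ jb x := (jb_pos x).le

lemma jb_neg (x : ℝ) : jb (-x) = jb x := by
  rw [jb, jb, neg_pow]
  norm_num

lemma jb_mono {x y : ℝ} (h : |x| ≤ |y|) : jb x ≤ jb y := by
  apply Real.sqrt_le_sqrt
  nlinarith [sq_abs x, sq_abs y, abs_nonneg x]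

lemma abs_le_jb (x : ℝ) : |x| ≤ jb x := by
  rw [jb, ← Real.sqrt_sq_eq_abs]
  exact Real.sqrt_le_sqrt (by nlinarith)

lemma jb_le_two_mul {x y : ℝ} (h : |y| ≤ 2 * |x|) : jb y ≤ 2 * jb x := by
  have h4 : (2:ℝ) * jb x = Real.sqrt (4 * (1 + x ^ 2)) := by
    rw [jb, show (4:ℝ) * (1 + x ^ 2) = 2 ^ 2 * (1 + x ^ 2) by ring,
      Real.sqrt_mul (by positivity), Real.sqrt_sq (by norm_num)]
  rw [h4, jb]
  exact Real.sqrt_le_sqrt (by nlinarith [sq_abs x, sq_abs y, abs_nonneg x, abs_nonneg y])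

lemma peetre (x y : ℝ) : jb (x + y) ≤ Real.sqrt 2 * jb x * jb y := by
  rw [jb]
  calc Real.sqrt (1 + (x + y) ^ 2) ≤ Real.sqrt (2 * (1 + x ^ 2) * (1 + y ^ 2)) := by
        apply Real.sqrt_le_sqrt
        nlinarith [sq_nonneg (x - y), sq_nonneg (x * y)]
    _ = Real.sqrt 2 * jb x * jb y := by
        rw [jb, jb, Real.sqrt_mul (by positivity : (0:ℝ) ≤ 2 * (1 + x ^ 2)),
          Real.sqrt_mul (by norm_num : (0:ℝ) ≤ 2)]

lemma jb_le_sqrt2_mul (x y : ℝ) : jb y ≤ Real.sqrt 2 * jb (y - x) * jb (y + x) := by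
  have h1 : jb y ≤ jb ((y - x) + (y + x)) := by
    apply jb_mono
    rw [show (y - x) + (y + x) = 2 * y by ring, abs_mul, abs_two]
    linarith [abs_nonneg y]
  exact h1.trans (peetre _ _)

/-- helper: antitone in base with doubling. -/
lemma rpow_half_base_le {K A : ℝ} (σ : ℝ) (hσ : 0 ≤ σ) (hK : 0 < K) (h : K ≤ 2 * A) :
    A ^ (-σ) ≤ 2 ^ σ * K ^ (-σ) := by
  have h1 : A ^ (-σ) ≤ (K / 2) ^ (-σ) :=
    Real.rpow_le_rpow_of_nonpos (by linarith) (by linarith) (by linarith)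
  have h2 : (K / 2) ^ (-σ) = 2 ^ σ * K ^ (-σ) := by
    rw [Real.div_rpow hK.le (by norm_num : (0:ℝ) ≤ 2),
      Real.rpow_neg (by norm_num : (0:ℝ) ≤ 2), div_eq_mul_inv, inv_inv, mul_comm]
  rw [h2] at h1; exact h1

/-- helper: bounded base to max exponent. -/
lemma rpow_le_max_exp {B K : ℝ} (e : ℝ) (hB : 1 ≤ B) (hBK : B ≤ K) :
    B ^ e ≤ K ^ max e 0 := by
  rcases le_or_gt e 0 with h | h
  · calc B ^ e ≤ 1 := Real.rpow_le_one_of_one_le_of_nonpos hB h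
      _ = K ^ (0:ℝ) := (Real.rpow_zero K).symm
      _ ≤ K ^ max e 0 := Real.rpow_le_rpow_of_exponent_le (hB.trans hBK) (le_max_right e 0)
  · rw [max_eq_left h.le]
    exact Real.rpow_le_rpow (by linarith) hBK h.le

lemma rpow_prod3_le_one {K : ℝ} (hK : 1 ≤ K) (e1 e2 e3 : ℝ) (h : e1 + e2 + e3 ≤ 0) :
    K ^ e1 * K ^ e2 * K ^ e3 ≤ 1 := by
  have hK0 : 0 < K := lt_of_lt_of_le one_pos hK
  rw [← Real.rpow_add hK0, ← Real.rpow_add hK0]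
  exact Real.rpow_le_one_of_one_le_of_nonpos hK h

lemma rpow_prod4_le_one {K : ℝ} (hK : 1 ≤ K) (e1 e2 e3 e4 : ℝ) (h : e1 + e2 + e3 + e4 ≤ 0) :
    K ^ e1 * K ^ e2 * K ^ e3 * K ^ e4 ≤ 1 := by
  have hK0 : 0 < K := lt_of_lt_of_le one_pos hK
  rw [← Real.rpow_add hK0, ← Real.rpow_add hK0, ← Real.rpow_add hK0]
  exact Real.rpow_le_one_of_one_le_of_nonpos hK h

/-- The key pointwise bound. -/
lemma key_pointwise (σ ρ αp β p : ℝ) (hσ : 0 < σ) (hρ : 0 ≤ ρ) (hα0 : 0 ≤ αp) (hβ0 : 0 < β)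
    (hβp : β ≤ p)
    (hE1 : αp ≤ σ + β) (hE2 : αp + p ≤ σ + ρ + 2 * β) (hE3 : αp ≤ ρ + 2 * β)
    (hE4a : p ≤ σ + β) (hE4b : αp + 2 * p ≤ 2 * σ + ρ + 2 * β) (x y : ℝ) :
    jb x ^ αp * jb y ^ (-σ) * jb (y - x) ^ (-(ρ + β)) * jb (y + x) ^ (-β)
      ≤ 2 ^ (2 * σ + ρ + 2 * β + p)
        * (jb y ^ (-p) + jb (y - x) ^ (-p) + jb (y + x) ^ (-p)) := by
  have hp0 : 0 < p := lt_of_lt_of_le hβ0 hβp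
  have two_pos' : (0:ℝ) < 2 := by norm_num
  set K := jb x with hK
  set A := jb y with hA
  set B := jb (y - x) with hB
  set D := jb (y + x) with hD
  have oneK : 1 ≤ K := one_le_jb x
  have oneA : 1 ≤ A := one_le_jb y
  have oneB : 1 ≤ B := one_le_jb (y - x)
  have oneD : 1 ≤ D := one_le_jb (y + x)
  have posK : 0 < K := jb_pos x
  have posA : 0 < A := jb_pos y
  have posB : 0 < B := jb_pos (y - x)
  have posD : 0 < D := jb_pos (y + x)
  have hApn : 0 ≤ A ^ (-p) := Real.rpow_nonneg posA.le _
  have hBpn : 0 ≤ B ^ (-p) := Real.rpow_nonneg posB.le _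
  have hDpn : 0 ≤ D ^ (-p) := Real.rpow_nonneg posD.le _
  -- final assembly helper
  have hfin : ∀ (c W : ℝ), c ≤ 2 ^ (2 * σ + ρ + 2 * β + p) →
      0 ≤ W → W ≤ A ^ (-p) + B ^ (-p) + D ^ (-p) →
      c * W ≤ 2 ^ (2 * σ + ρ + 2 * β + p) * (A ^ (-p) + B ^ (-p) + D ^ (-p)) := by
    intro c W hc hW hWle
    exact mul_le_mul hc hWle hW (Real.rpow_nonneg (by norm_num) _)
  rcases le_or_gt (2 * |y - x|) |x| with h1 | h1
  · -- region near y = x : majorize by B^(-p)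
    have hxy : |x| ≤ 2 * |y| := by
      have h' : |y - (y - x)| ≤ |y| + |y - x| := abs_sub y (y - x)
      rw [show y - (y - x) = x by ring] at h'
      linarith
    have hKA : K ≤ 2 * A := jb_le_two_mul hxy
    have hxd : |x| ≤ 2 * |y + x| := by
      have h' : |(y + x) - (y - x)| ≤ |y + x| + |y - x| := abs_sub (y + x) (y - x)
      rw [show (y + x) - (y - x) = 2 * x by ring, abs_mul, abs_two] at h'
      linarith [abs_nonneg (y + x)]
    have hKD : K ≤ 2 * D := jb_le_two_mul hxd
    have hBK : B ≤ K := jb_mono (by linarith [abs_nonneg (y - x)])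
    calc K ^ αp * A ^ (-σ) * B ^ (-(ρ + β)) * D ^ (-β)
        = K ^ αp * A ^ (-σ) * (B ^ (-p) * B ^ (p - (ρ + β))) * D ^ (-β) := by
          rw [← Real.rpow_add posB, show -p + (p - (ρ + β)) = -(ρ + β) by ring]
      _ ≤ K ^ αp * (2 ^ σ * K ^ (-σ)) * (B ^ (-p) * K ^ max (p - (ρ + β)) 0)
            * (2 ^ β * K ^ (-β)) := by
          gcongr K ^ αp * ?_ * (B ^ (-p) * ?_) * ?_
          · exact rpow_half_base_le σ hσ.le posK hKA
          · exact rpow_le_max_exp _ oneB hBK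
          · exact rpow_half_base_le β hβ0.le posK hKD
      _ = (2 ^ σ * 2 ^ β) * (K ^ αp * K ^ (-σ) * K ^ max (p - (ρ + β)) 0 * K ^ (-β))
            * B ^ (-p) := by ring
      _ ≤ (2 ^ σ * 2 ^ β) * 1 * B ^ (-p) := by
          gcongr (2 ^ σ * 2 ^ β) * ?_ * B ^ (-p)
          apply rpow_prod4_le_one oneK
          have hm : max (p - (ρ + β)) 0 ≤ σ + β - αp :=
            max_le (by linarith) (by linarith)
          linarith
      _ = (2 ^ σ * 2 ^ β) * B ^ (-p) := by rw [mul_one]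
      _ ≤ 2 ^ (2 * σ + ρ + 2 * β + p) * (A ^ (-p) + B ^ (-p) + D ^ (-p)) := by
          apply hfin _ _ _ hBpn (by linarith)
          rw [← Real.rpow_add two_pos']
          exact Real.rpow_le_rpow_of_exponent_le one_le_two (by linarith)
  rcases le_or_gt (2 * |y + x|) |x| with h2 | h2
  · -- region near y = -x : majorize by D^(-p)
    have hxy : |x| ≤ 2 * |y| := by
      have h' : |(y + x) - y| ≤ |y + x| + |y| := abs_sub (y + x) y
      rw [show (y + x) - y = x by ring] at h'
      linarith
    have hKA : K ≤ 2 * A := jb_le_two_mul hxy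
    have hKB : K ≤ 2 * B := jb_le_two_mul h1.le
    have hDK : D ≤ K := jb_mono (by linarith [abs_nonneg (y + x)])
    calc K ^ αp * A ^ (-σ) * B ^ (-(ρ + β)) * D ^ (-β)
        = K ^ αp * A ^ (-σ) * B ^ (-(ρ + β)) * (D ^ (-p) * D ^ (p - β)) := by
          rw [← Real.rpow_add posD, show -p + (p - β) = -β by ring]
      _ ≤ K ^ αp * (2 ^ σ * K ^ (-σ)) * (2 ^ (ρ + β) * K ^ (-(ρ + β)))
            * (D ^ (-p) * K ^ max (p - β) 0) := by
          gcongr K ^ αp * ?_ * ?_ * (D ^ (-p) * ?_)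
          · exact rpow_half_base_le σ hσ.le posK hKA
          · exact rpow_half_base_le (ρ + β) (by linarith) posK hKB
          · exact rpow_le_max_exp _ oneD hDK
      _ = (2 ^ σ * 2 ^ (ρ + β)) * (K ^ αp * K ^ (-σ) * K ^ (-(ρ + β)) * K ^ max (p - β) 0)
            * D ^ (-p) := by ring
      _ ≤ (2 ^ σ * 2 ^ (ρ + β)) * 1 * D ^ (-p) := by
          gcongr (2 ^ σ * 2 ^ (ρ + β)) * ?_ * D ^ (-p)
          apply rpow_prod4_le_one oneK
          have hm : max (p - β) 0 ≤ σ + ρ + β - αp :=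
            max_le (by linarith) (by linarith)
          linarith
      _ = (2 ^ σ * 2 ^ (ρ + β)) * D ^ (-p) := by rw [mul_one]
      _ ≤ 2 ^ (2 * σ + ρ + 2 * β + p) * (A ^ (-p) + B ^ (-p) + D ^ (-p)) := by
          apply hfin _ _ _ hDpn (by linarith)
          rw [← Real.rpow_add two_pos']
          exact Real.rpow_le_rpow_of_exponent_le one_le_two (by linarith)
  · -- remaining region : majorize by A^(-p)
    have hKB : K ≤ 2 * B := jb_le_two_mul h1.le
    have hKD : K ≤ 2 * D := jb_le_two_mul h2.le
    rcases le_or_gt p σ with hcase | hcase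
    · calc K ^ αp * A ^ (-σ) * B ^ (-(ρ + β)) * D ^ (-β)
          ≤ K ^ αp * A ^ (-p) * (2 ^ (ρ + β) * K ^ (-(ρ + β))) * (2 ^ β * K ^ (-β)) := by
            gcongr K ^ αp * ?_ * ?_ * ?_
            · exact Real.rpow_le_rpow_of_exponent_le oneA (by linarith)
            · exact rpow_half_base_le (ρ + β) (by linarith) posK hKB
            · exact rpow_half_base_le β hβ0.le posK hKD
        _ = (2 ^ (ρ + β) * 2 ^ β) * (K ^ αp * K ^ (-(ρ + β)) * K ^ (-β)) * A ^ (-p) := by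
            ring
        _ ≤ (2 ^ (ρ + β) * 2 ^ β) * 1 * A ^ (-p) := by
            gcongr (2 ^ (ρ + β) * 2 ^ β) * ?_ * A ^ (-p)
            exact rpow_prod3_le_one oneK _ _ _ (by linarith)
        _ = (2 ^ (ρ + β) * 2 ^ β) * A ^ (-p) := by rw [mul_one]
        _ ≤ 2 ^ (2 * σ + ρ + 2 * β + p) * (A ^ (-p) + B ^ (-p) + D ^ (-p)) := by
            apply hfin _ _ _ hApn (by linarith)
            rw [← Real.rpow_add two_pos']
            exact Real.rpow_le_rpow_of_exponent_le one_le_two (by linarith)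
    · -- σ < p
      have hA2 : A ≤ Real.sqrt 2 * B * D := jb_le_sqrt2_mul x y
      have hs2 : Real.sqrt 2 ≤ 2 := by
        nlinarith [Real.sq_sqrt (show (0:ℝ) ≤ 2 by norm_num), Real.sqrt_nonneg 2]
      have hs2n : 0 ≤ Real.sqrt 2 := Real.sqrt_nonneg 2
      calc K ^ αp * A ^ (-σ) * B ^ (-(ρ + β)) * D ^ (-β)
          = K ^ αp * (A ^ (-p) * A ^ (p - σ)) * B ^ (-(ρ + β)) * D ^ (-β) := by
            rw [← Real.rpow_add posA, show -p + (p - σ) = -σ by ring]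
        _ ≤ K ^ αp * (A ^ (-p) * (Real.sqrt 2 * B * D) ^ (p - σ)) * B ^ (-(ρ + β))
              * D ^ (-β) := by
            gcongr K ^ αp * (A ^ (-p) * ?_) * B ^ (-(ρ + β)) * D ^ (-β)
            exact Real.rpow_le_rpow posA.le hA2 (by linarith)
        _ = K ^ αp * A ^ (-p) * Real.sqrt 2 ^ (p - σ)
              * (B ^ (p - σ) * B ^ (-(ρ + β))) * (D ^ (p - σ) * D ^ (-β)) := by
            rw [Real.mul_rpow (by positivity) posD.le, Real.mul_rpow hs2n posB.le]
            ring
        _ = K ^ αp * A ^ (-p) * Real.sqrt 2 ^ (p - σ)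
              * B ^ (-(σ + ρ + β - p)) * D ^ (-(σ + β - p)) := by
            rw [← Real.rpow_add posB, ← Real.rpow_add posD,
              show p - σ + -(ρ + β) = -(σ + ρ + β - p) by ring,
              show p - σ + -β = -(σ + β - p) by ring]
        _ ≤ K ^ αp * A ^ (-p) * (2:ℝ) ^ (p - σ)
              * (2 ^ (σ + ρ + β - p) * K ^ (-(σ + ρ + β - p)))
              * (2 ^ (σ + β - p) * K ^ (-(σ + β - p))) := by
            gcongr K ^ αp * A ^ (-p) * ?_ * ?_ * ?_
            · exact Real.rpow_le_rpow hs2n hs2 (by linarith)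
            · exact rpow_half_base_le (σ + ρ + β - p) (by linarith) posK hKB
            · exact rpow_half_base_le (σ + β - p) (by linarith) posK hKD
        _ = (2 ^ (p - σ) * 2 ^ (σ + ρ + β - p) * 2 ^ (σ + β - p))
              * (K ^ αp * K ^ (-(σ + ρ + β - p)) * K ^ (-(σ + β - p))) * A ^ (-p) := by
            ring
        _ ≤ (2 ^ (p - σ) * 2 ^ (σ + ρ + β - p) * 2 ^ (σ + β - p)) * 1 * A ^ (-p) := by
            gcongr (2 ^ (p - σ) * 2 ^ (σ + ρ + β - p) * 2 ^ (σ + β - p)) * ?_ * A ^ (-p)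
            exact rpow_prod3_le_one oneK _ _ _ (by linarith)
        _ = (2 ^ (p - σ) * 2 ^ (σ + ρ + β - p) * 2 ^ (σ + β - p)) * A ^ (-p) := by
            rw [mul_one]
        _ ≤ 2 ^ (2 * σ + ρ + 2 * β + p) * (A ^ (-p) + B ^ (-p) + D ^ (-p)) := by
            apply hfin _ _ _ hApn (by linarith)
            rw [← Real.rpow_add two_pos', ← Real.rpow_add two_pos']
            exact Real.rpow_le_rpow_of_exponent_le one_le_two (by linarith)

lemma summable_jb_rpow {p : ℝ} (hp : 1 < p) :
    Summable (fun l : ℤ => jb (l : ℝ) ^ (-p)) := by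
  have h2 : Summable (fun l : ℤ => if l = 0 then (1:ℝ) else 0) := by
    apply summable_of_ne_finset_zero (s := ({0} : Finset ℤ))
    intro b hb
    simp only [Finset.mem_singleton] at hb
    simp [hb]
  have h1 : Summable (fun l : ℤ => |(l : ℝ)| ^ (-p) + if l = 0 then (1:ℝ) else 0) :=
    (Real.summable_abs_int_rpow hp).add h2
  apply Summable.of_nonneg_of_le (fun l => Real.rpow_nonneg (jb_nonneg _) _) _ h1
  intro l
  rcases eq_or_ne l 0 with rfl | hl
  · have : jb ((0:ℤ) : ℝ) = 1 := by
      rw [jb]; norm_num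
    rw [this]
    simp [Real.one_rpow, Real.zero_rpow (by linarith : -p ≠ 0)]
  · have hl0 : 0 < |(l : ℝ)| := by
      rw [abs_pos]
      exact_mod_cast hl
    have h3 : jb (l : ℝ) ^ (-p) ≤ |(l : ℝ)| ^ (-p) :=
      Real.rpow_le_rpow_of_nonpos hl0 (abs_le_jb _) (by linarith)
    simp only [hl, if_false, add_zero]
    exact h3

/-- The key uniform summation bound in the proof of the bilinear estimate. -/
theorem multiplier_sum_bound (r s a : ℝ) (hr : 0 ≤ r) (hs0 : 0 < s) (hs1 : s < 1 + r)
    (har : a ≤ r) (hars : a < 1 + r - s) (ha2 : a < 1 / 2) :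
    ∃ ε : ℝ, 0 < ε ∧ ∀ b' : ℝ, 1 / 2 < b' → b' < 1 / 2 + ε →
      ∃ C : ℝ, 0 < C ∧ ∀ k : ℤ,
        Summable (fun l : {l : ℤ // l ≠ k ∧ l ≠ -k} =>
          jb k ^ (2 * s + 2 * a) * jb (l : ℤ) ^ (-(2 * s)) * jb (k - (l : ℤ)) ^ (-(2 * r))
            * jb ((l : ℤ) + k) ^ (-(2 - 2 * b')) * jb ((l : ℤ) - k) ^ (-(2 - 2 * b'))) ∧
        (∑' l : {l : ℤ // l ≠ k ∧ l ≠ -k},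
          jb k ^ (2 * s + 2 * a) * jb (l : ℤ) ^ (-(2 * s)) * jb (k - (l : ℤ)) ^ (-(2 * r))
            * jb ((l : ℤ) + k) ^ (-(2 - 2 * b')) * jb ((l : ℤ) - k) ^ (-(2 - 2 * b'))) ≤ C := by
  set M : ℝ := max (2 * s + 2 * a) 0 with hM
  have hM0 : 0 ≤ M := le_max_right _ _
  have g1pos : 0 < 2 * s + 1 - M := by
    have := max_lt (show 2 * s + 2 * a < 2 * s + 1 by linarith)
      (show (0:ℝ) < 2 * s + 1 by linarith)
    linarith
  have g2pos : 0 < 2 + 2 * r - M := by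
    have := max_lt (show 2 * s + 2 * a < 2 + 2 * r by linarith)
      (show (0:ℝ) < 2 + 2 * r by linarith)
    linarith
  have g3 : M ≤ 2 * s + 2 * r := max_le (by linarith) (by linarith)
  set E : ℝ := min (min (2 * s + 1 - M) (2 + 2 * r - M)) (min (2 * s) 1) / 100 with hE
  have hEpos : 0 < E := by
    apply div_pos _ (by norm_num)
    exact lt_min (lt_min g1pos g2pos) (lt_min (by linarith) one_pos)
  refine ⟨E, hEpos, ?_⟩
  intro b' hb1 hb2
  have hE1' : E ≤ (2 * s + 1 - M) / 100 := by
    exact (div_le_div_iff_of_pos_right (by norm_num : (0:ℝ) < 100)).mpr (le_trans (min_le_left _ _) (min_le_left _ _))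
  have hE2' : E ≤ (2 + 2 * r - M) / 100 := by
    exact (div_le_div_iff_of_pos_right (by norm_num : (0:ℝ) < 100)).mpr (le_trans (min_le_left _ _) (min_le_right _ _))
  have hE3' : E ≤ 2 * s / 100 := by
    exact (div_le_div_iff_of_pos_right (by norm_num : (0:ℝ) < 100)).mpr (le_trans (min_le_right _ _) (min_le_left _ _))
  have hE4' : E ≤ 1 / 100 := by
    exact (div_le_div_iff_of_pos_right (by norm_num : (0:ℝ) < 100)).mpr (le_trans (min_le_right _ _) (min_le_right _ _))
  set β : ℝ := 2 - 2 * b' with hβ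
  set δ : ℝ := min (2 * s) 1 / 8 with hδ
  have hδ1 : δ ≤ 2 * s / 8 := by
    exact (div_le_div_iff_of_pos_right (by norm_num : (0:ℝ) < 8)).mpr (min_le_left _ _)
  have hδ2 : δ ≤ 1 / 8 := by
    exact (div_le_div_iff_of_pos_right (by norm_num : (0:ℝ) < 8)).mpr (min_le_right _ _)
  have hδpos : 0 < δ := by
    apply div_pos (lt_min (by linarith) one_pos) (by norm_num)
  set p : ℝ := 1 + δ with hp
  have hβlt : β < 1 := by rw [hβ]; linarith
  have hβgt : 1 - 2 * E < β := by rw [hβ]; linarith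
  have hβ0 : 0 < β := by linarith
  have hβp : β ≤ p := by rw [hp]; linarith
  have hppos : 1 < p := by rw [hp]; linarith
  -- key lemma hypotheses
  have kE1 : M ≤ 2 * s + β := by linarith
  have kE2 : M + p ≤ 2 * s + 2 * r + 2 * β := by rw [hp]; linarith
  have kE3 : M ≤ 2 * r + 2 * β := by linarith
  have kE4a : p ≤ 2 * s + β := by rw [hp]; linarith
  have kE4b : M + 2 * p ≤ 2 * (2 * s) + 2 * r + 2 * β := by rw [hp]; linarith
  set C₀ : ℝ := 2 ^ (2 * (2 * s) + 2 * r + 2 * β + p) with hC₀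
  have hC₀pos : 0 < C₀ := Real.rpow_pos_of_pos (by norm_num) _
  have hsum0 : Summable (fun l : ℤ => jb (l : ℝ) ^ (-p)) := summable_jb_rpow hppos
  set Z : ℝ := ∑' l : ℤ, jb (l : ℝ) ^ (-p) with hZ
  have hZ0 : 0 ≤ Z := tsum_nonneg (fun l => Real.rpow_nonneg (jb_nonneg _) _)
  refine ⟨C₀ * (Z + Z + Z) + 1, by positivity, ?_⟩
  intro k
  -- summand over ℤ
  set F : ℤ → ℝ := fun l =>
    jb (k : ℝ) ^ (2 * s + 2 * a) * jb (l : ℝ) ^ (-(2 * s))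
      * jb ((k : ℝ) - (l : ℝ)) ^ (-(2 * r)) * jb ((l : ℝ) + (k : ℝ)) ^ (-β)
      * jb ((l : ℝ) - (k : ℝ)) ^ (-β) with hF
  set G : ℤ → ℝ := fun l =>
    C₀ * (jb (l : ℝ) ^ (-p) + jb ((l : ℝ) - (k : ℝ)) ^ (-p)
      + jb ((l : ℝ) + (k : ℝ)) ^ (-p)) with hG
  have hFnonneg : ∀ l : ℤ, 0 ≤ F l := by
    intro l
    exact mul_nonneg (mul_nonneg (mul_nonneg (mul_nonneg
      (Real.rpow_nonneg (jb_nonneg _) _) (Real.rpow_nonneg (jb_nonneg _) _))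
      (Real.rpow_nonneg (jb_nonneg _) _)) (Real.rpow_nonneg (jb_nonneg _) _))
      (Real.rpow_nonneg (jb_nonneg _) _)
  have hFG : ∀ l : ℤ, F l ≤ G l := by
    intro l
    have hkey := key_pointwise (2 * s) (2 * r) M β p (by linarith) (by linarith) hM0 hβ0
      hβp kE1 kE2 kE3 kE4a kE4b (k : ℝ) (l : ℝ)
    have hjbflip : jb ((k : ℝ) - (l : ℝ)) = jb ((l : ℝ) - (k : ℝ)) := by
      rw [show (k : ℝ) - (l : ℝ) = -((l : ℝ) - (k : ℝ)) by ring, jb_neg]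
    have hmerge : jb ((l : ℝ) - (k : ℝ)) ^ (-(2 * r)) * jb ((l : ℝ) - (k : ℝ)) ^ (-β)
        = jb ((l : ℝ) - (k : ℝ)) ^ (-(2 * r + β)) := by
      rw [← Real.rpow_add (jb_pos _), show -(2 * r) + -β = -(2 * r + β) by ring]
    have hstep : F l ≤ jb (k : ℝ) ^ M * jb (l : ℝ) ^ (-(2 * s))
        * jb ((l : ℝ) - (k : ℝ)) ^ (-(2 * r + β)) * jb ((l : ℝ) + (k : ℝ)) ^ (-β) := by
      calc F l = jb (k : ℝ) ^ (2 * s + 2 * a)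
            * (jb (l : ℝ) ^ (-(2 * s))
              * (jb ((l : ℝ) - (k : ℝ)) ^ (-(2 * r)) * jb ((l : ℝ) - (k : ℝ)) ^ (-β))
              * jb ((l : ℝ) + (k : ℝ)) ^ (-β)) := by
            simp only [hF]
            rw [hjbflip]; ring
        _ = jb (k : ℝ) ^ (2 * s + 2 * a)
            * (jb (l : ℝ) ^ (-(2 * s)) * jb ((l : ℝ) - (k : ℝ)) ^ (-(2 * r + β))
              * jb ((l : ℝ) + (k : ℝ)) ^ (-β)) := by rw [hmerge]
        _ ≤ jb (k : ℝ) ^ M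
            * (jb (l : ℝ) ^ (-(2 * s)) * jb ((l : ℝ) - (k : ℝ)) ^ (-(2 * r + β))
              * jb ((l : ℝ) + (k : ℝ)) ^ (-β)) := by
            apply mul_le_mul_of_nonneg_right
              (Real.rpow_le_rpow_of_exponent_le (one_le_jb _) (le_max_left _ _))
            exact mul_nonneg (mul_nonneg (Real.rpow_nonneg (jb_nonneg _) _)
              (Real.rpow_nonneg (jb_nonneg _) _)) (Real.rpow_nonneg (jb_nonneg _) _)
        _ = jb (k : ℝ) ^ M * jb (l : ℝ) ^ (-(2 * s))
            * jb ((l : ℝ) - (k : ℝ)) ^ (-(2 * r + β)) * jb ((l : ℝ) + (k : ℝ)) ^ (-β) := by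
            ring
    calc F l ≤ _ := hstep
      _ ≤ C₀ * (jb (l : ℝ) ^ (-p) + jb ((l : ℝ) - (k : ℝ)) ^ (-p)
            + jb ((l : ℝ) + (k : ℝ)) ^ (-p)) := hkey
      _ = G l := rfl
  -- summability of the three shifted families
  have hsumB : Summable (fun l : ℤ => jb ((l : ℝ) - (k : ℝ)) ^ (-p)) := by
    have h := (Equiv.subRight k).summable_iff.mpr hsum0
    apply h.congr
    intro l
    simp only [Function.comp_apply, Equiv.subRight_apply]
    push_cast
    ring_nf
  have hsumD : Summable (fun l : ℤ => jb ((l : ℝ) + (k : ℝ)) ^ (-p)) := by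
    have h := (Equiv.addRight k).summable_iff.mpr hsum0
    apply h.congr
    intro l
    simp only [Function.comp_apply, Equiv.coe_addRight]
    push_cast
    ring_nf
  have htsumB : (∑' l : ℤ, jb ((l : ℝ) - (k : ℝ)) ^ (-p)) = Z := by
    rw [hZ]
    rw [← Equiv.tsum_eq (Equiv.subRight k) (fun l : ℤ => jb (l : ℝ) ^ (-p))]
    apply tsum_congr
    intro l
    simp only [Equiv.subRight_apply]
    push_cast
    ring_nf
  have htsumD : (∑' l : ℤ, jb ((l : ℝ) + (k : ℝ)) ^ (-p)) = Z := by
    rw [hZ]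
    rw [← Equiv.tsum_eq (Equiv.addRight k) (fun l : ℤ => jb (l : ℝ) ^ (-p))]
    apply tsum_congr
    intro l
    simp only [Equiv.coe_addRight]
    push_cast
    ring_nf
  have hsumG : Summable G := by
    rw [hG]
    exact ((hsum0.add hsumB).add hsumD).mul_left C₀
  have hsumF : Summable F := Summable.of_nonneg_of_le hFnonneg hFG hsumG
  have hsumFsub : Summable (fun l : {l : ℤ // l ≠ k ∧ l ≠ -k} => F (l : ℤ)) :=
    hsumF.subtype {l : ℤ | l ≠ k ∧ l ≠ -k}
  constructor
  · exact hsumFsub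
  · calc (∑' l : {l : ℤ // l ≠ k ∧ l ≠ -k}, F (l : ℤ))
        ≤ ∑' l : ℤ, F l := Summable.tsum_subtype_le F {l : ℤ | l ≠ k ∧ l ≠ -k} hFnonneg hsumF
      _ ≤ ∑' l : ℤ, G l := Summable.tsum_le_tsum hFG hsumF hsumG
      _ = C₀ * (Z + Z + Z) := by
          rw [hG, tsum_mul_left, Summable.tsum_add (hsum0.add hsumB) hsumD,
            Summable.tsum_add hsum0 hsumB, htsumB, htsumD, ← hZ]
      _ ≤ C₀ * (Z + Z + Z) + 1 := by linarith
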